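/- The schema [⟨A∖(G∪H)⟩]φ → ⟨[G]⟩⟨[H]⟩φ is not valid: with agents A = {a,b,c}, G = {a}, H = {b}, propositional variables p, q, r, and φ := K_b(p∧q∧r) ∧ ¬K_a(p∧q∧r) ∧ ¬K_c(p∧q∧r), there is a pointed epistemic model (M, pqr) — with four states pqr, pq¬r, ¬pqr, p¬qr, where agent a cannot distinguish pqr from ¬pqr, agent b cannot distinguish pqr from p¬qr, agent c cannot distinguish pqr, pq¬r, ¬pqr from each other, and the valuation sets each of p, q, r true exactly at the states whose name contains it unnegated — such that (M, pqr) ⊨ [⟨{c}⟩]φ but (M, pqr) ⊭ ⟨[{a}]⟩⟨[{b}]⟩φ. -/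

import Mathlib

/- Formalization of Coalition and Relativised Group Announcement Logic (CoRGAL). -/

namespace CoRGAL

/-- Purely epistemic formulas (the fragment L_EL). -/
inductive EForm (Agt : Type) : Type
  | atom : ℕ → EForm Agt
  | neg  : EForm Agt → EForm Agt
  | and  : EForm Agt → EForm Agt → EForm Agt
  | know : Agt → EForm Agt → EForm Agt

/-- Formulas of L_CoRGAL: atoms, ¬, ∧, K_a, [φ]ψ, [G,χ]φ, [⟨G⟩]φ. -/
inductive Form (Agt : Type) : Type
  | atom  : ℕ → Form Agt
  | neg   : Form Agt → Form Agt
  | and   : Form Agt → Form Agt → Form Agt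
  | know  : Agt → Form Agt → Form Agt
  | ann   : Form Agt → Form Agt → Form Agt          -- [φ]ψ
  | group : Finset Agt → Form Agt → Form Agt → Form Agt  -- [G,χ]φ
  | coal  : Finset Agt → Form Agt → Form Agt        -- [⟨G⟩]φ

variable {Agt : Type}

def Form.imp (φ ψ : Form Agt) : Form Agt := .neg (.and φ (.neg ψ))
def Form.iff' (φ ψ : Form Agt) : Form Agt := .and (φ.imp ψ) (ψ.imp φ)
def Form.bot : Form Agt := .and (.atom 0) (.neg (.atom 0))
def Form.top : Form Agt := .neg Form.bot

def EForm.toForm : EForm Agt → Form Agt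
  | .atom p => .atom p
  | .neg φ => .neg φ.toForm
  | .and φ ψ => .and φ.toForm ψ.toForm
  | .know a φ => .know a φ.toForm

/-- The G-announcement ⋀_{i ∈ G} K_i (f i), with all f i epistemic. -/
noncomputable def GAnn (G : Finset Agt) (f : Agt → EForm Agt) : Form Agt :=
  (G.toList.map fun i => Form.know i (f i).toForm).foldr Form.and Form.top

/-- Epistemic models: states, an equivalence relation for each agent, a valuation. -/
structure Model (Agt : Type) where
  W : Type
  rel : Agt → W → W → Prop
  rel_equiv : ∀ a, Equivalence (rel a)
  val : ℕ → W → Prop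

/-- Updated model: restriction to the states satisfying S. -/
def Model.restrict (M : Model Agt) (S : M.W → Prop) : Model Agt where
  W := {v : M.W // S v}
  rel a u v := M.rel a u.1 v.1
  rel_equiv a := ⟨fun u => (M.rel_equiv a).refl u.1,
    fun h => (M.rel_equiv a).symm h, fun h h' => (M.rel_equiv a).trans h h'⟩
  val p v := M.val p v.1

/-- Satisfaction for purely epistemic formulas (standard S5 semantics). -/
def esat (M : Model Agt) : M.W → EForm Agt → Prop
  | w, .atom p => M.val p w
  | w, .neg φ => ¬ esat M w φ
  | w, .and φ ψ => esat M w φ ∧ esat M w ψ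
  | w, .know a φ => ∀ v, M.rel a w v → esat M v φ

/-- Truth of the G-announcement ⋀_{i∈G} K_i (f i) at (M,w). -/
def gsat (M : Model Agt) (w : M.W) (G : Finset Agt) (f : Agt → EForm Agt) : Prop :=
  ∀ i ∈ G, ∀ v, M.rel i w v → esat M v (f i)

variable [DecidableEq Agt] [Fintype Agt]

/-- Satisfaction for L_CoRGAL.
[φ]ψ: if φ is true then ψ holds in the model restricted to φ-states.
[G,χ]φ: χ is true and for every G-announcement ψ_G, [ψ_G ∧ χ]φ.
[⟨G⟩]φ: for every G-announcement ψ_G there is an (A∖G)-announcement χ such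
that if ψ_G is true then ⟨ψ_G ∧ χ⟩φ. -/
def sat : (M : Model Agt) → M.W → Form Agt → Prop
  | M, w, .atom p => M.val p w
  | M, w, .neg φ => ¬ sat M w φ
  | M, w, .and φ ψ => sat M w φ ∧ sat M w ψ
  | M, w, .know a φ => ∀ v, M.rel a w v → sat M v φ
  | M, w, .ann φ ψ =>
      ∀ h : sat M w φ, sat (M.restrict fun v => sat M v φ) ⟨w, h⟩ ψ
  | M, w, .group G χ φ =>
      sat M w χ ∧ ∀ f : Agt → EForm Agt,
        ∀ h : gsat M w G f ∧ sat M w χ,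
          sat (M.restrict fun v => gsat M v G f ∧ sat M v χ) ⟨w, h⟩ φ
  | M, w, .coal G φ =>
      ∀ f : Agt → EForm Agt, ∃ g : Agt → EForm Agt,
        gsat M w G f →
          ∃ h : gsat M w G f ∧ gsat M w Gᶜ g,
            sat (M.restrict fun v => gsat M v G f ∧ gsat M v Gᶜ g) ⟨w, h⟩ φ

/-- Validity: truth at every pointed epistemic model. -/
def valid (φ : Form Agt) : Prop := ∀ (M : Model Agt) (w : M.W), sat M w φ

/-- The dual coalition operator ⟨[G]⟩φ := ¬[⟨G⟩]¬φ. -/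
def coalDia (G : Finset Agt) (φ : Form Agt) : Form Agt := .neg (.coal G (.neg φ))

/-- Necessity forms η ::= ♯ | φ → η | K_a η | [φ]η. -/
inductive NForm (Agt : Type) : Type
  | hole : NForm Agt
  | imp  : Form Agt → NForm Agt → NForm Agt
  | know : Agt → NForm Agt → NForm Agt
  | ann  : Form Agt → NForm Agt → NForm Agt

/-- η(φ): replace the placeholder ♯ by φ. -/
def NForm.subst : NForm Agt → Form Agt → Form Agt
  | .hole, φ => φ
  | .imp ψ η, φ => ψ.imp (η.subst φ)
  | .know a η, φ => .know a (η.subst φ)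
  | .ann ψ η, φ => .ann ψ (η.subst φ)

/-- Instances of propositional tautologies (treating non-Boolean subformulas as atoms). -/
def Tautology (φ : Form Agt) : Prop :=
  ∀ v : Form Agt → Prop,
    (∀ ψ, v (Form.neg ψ) ↔ ¬ v ψ) →
    (∀ ψ χ, v (Form.and ψ χ) ↔ (v ψ ∧ v χ)) →
    v φ

/-- The axiom system CoRGAL: theorems. -/
inductive Thm {Agt : Type} [DecidableEq Agt] [Fintype Agt] : Form Agt → Prop
  | taut {φ : Form Agt} : Tautology φ → Thm φ
  | a1 (a : Agt) (φ ψ : Form Agt) :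
      Thm ((Form.know a (φ.imp ψ)).imp ((Form.know a φ).imp (Form.know a ψ)))
  | a2 (a : Agt) (φ : Form Agt) : Thm ((Form.know a φ).imp φ)
  | a3 (a : Agt) (φ : Form Agt) : Thm ((Form.know a φ).imp (Form.know a (Form.know a φ)))
  | a4 (a : Agt) (φ : Form Agt) :
      Thm ((Form.neg (Form.know a φ)).imp (Form.know a (Form.neg (Form.know a φ))))
  | a5 (φ : Form Agt) (p : ℕ) : Thm ((Form.ann φ (.atom p)).iff' (φ.imp (.atom p)))
  | a6 (φ ψ : Form Agt) : Thm ((Form.ann φ (.neg ψ)).iff' (φ.imp (.neg (Form.ann φ ψ))))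
  | a7 (φ ψ χ : Form Agt) :
      Thm ((Form.ann φ (.and ψ χ)).iff' ((Form.ann φ ψ).and (Form.ann φ χ)))
  | a8 (φ : Form Agt) (a : Agt) (ψ : Form Agt) :
      Thm ((Form.ann φ (.know a ψ)).iff' (φ.imp (.know a (Form.ann φ ψ))))
  | a9 (φ ψ χ : Form Agt) :
      Thm ((Form.ann φ (.ann ψ χ)).iff' (Form.ann (φ.and (Form.ann φ ψ)) χ))
  | a10 (G : Finset Agt) (χ φ : Form Agt) (f : Agt → EForm Agt) :
      Thm ((Form.group G χ φ).imp (χ.and (Form.ann ((GAnn G f).and χ) φ)))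
  | a11 (G : Finset Agt) (φ : Form Agt) (f : Agt → EForm Agt) :
      Thm ((Form.coal G φ).imp (.neg (Form.group Gᶜ (GAnn G f) (.neg φ))))
  | mp {φ ψ : Form Agt} : Thm (φ.imp ψ) → Thm φ → Thm ψ
  | necK (a : Agt) {φ : Form Agt} : Thm φ → Thm (Form.know a φ)
  | necAnn (ψ : Form Agt) {φ : Form Agt} : Thm φ → Thm (Form.ann ψ φ)
  | necGroup (G : Finset Agt) (χ : Form Agt) {φ : Form Agt} : Thm φ → Thm (Form.group G χ φ)
  | necCoal (G : Finset Agt) {φ : Form Agt} : Thm φ → Thm (Form.coal G φ)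
  | r5 {η : NForm Agt} {G : Finset Agt} {χ φ : Form Agt} :
      (∀ f : Agt → EForm Agt, Thm (η.subst (χ.and (Form.ann ((GAnn G f).and χ) φ)))) →
      Thm (η.subst (Form.group G χ φ))
  | r6 {η : NForm Agt} {G : Finset Agt} {φ : Form Agt} :
      (∀ f : Agt → EForm Agt, Thm (η.subst (.neg (Form.group Gᶜ (GAnn G f) (.neg φ))))) →
      Thm (η.subst (Form.coal G φ))

/-- A theory: contains all theorems, closed under modus ponens (R0), R5 and R6. -/
structure IsTheory (x : Set (Form Agt)) : Prop where
  mem_of_thm : ∀ {φ : Form Agt}, Thm φ → φ ∈ x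
  mp : ∀ {φ ψ : Form Agt}, φ.imp ψ ∈ x → φ ∈ x → ψ ∈ x
  r5 : ∀ (η : NForm Agt) (G : Finset Agt) (χ φ : Form Agt),
        (∀ f : Agt → EForm Agt, η.subst (χ.and (Form.ann ((GAnn G f).and χ) φ)) ∈ x) →
        η.subst (Form.group G χ φ) ∈ x
  r6 : ∀ (η : NForm Agt) (G : Finset Agt) (φ : Form Agt),
        (∀ f : Agt → EForm Agt, η.subst (.neg (Form.group Gᶜ (GAnn G f) (.neg φ))) ∈ x) →
        η.subst (Form.coal G φ) ∈ x

def Consistent (x : Set (Form Agt)) : Prop := Form.bot ∉ x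
def Maximal (x : Set (Form Agt)) : Prop := ∀ φ : Form Agt, φ ∈ x ∨ Form.neg φ ∈ x
def MCT (x : Set (Form Agt)) : Prop := IsTheory x ∧ Consistent x ∧ Maximal x

/-- The canonical model: worlds are maximal consistent theories. -/
def canonicalModel (Agt : Type) [DecidableEq Agt] [Fintype Agt] : Model Agt where
  W := {x : Set (Form Agt) // MCT x}
  rel a x y := {φ : Form Agt | Form.know a φ ∈ x.1} = {φ : Form Agt | Form.know a φ ∈ y.1}
  rel_equiv _ := ⟨fun _ => rfl, Eq.symm, Eq.trans⟩
  val p x := Form.atom p ∈ x.1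

/-- Size of a formula. -/
def fsize : Form Agt → ℕ
  | .atom _ => 1
  | .neg φ => fsize φ + 1
  | .know _ φ => fsize φ + 1
  | .group _ _ φ => fsize φ + 1
  | .coal _ φ => fsize φ + 1
  | .and φ ψ => fsize φ + fsize ψ + 1
  | .ann ψ φ => fsize ψ + 3 * fsize φ

/-- The [,]-depth. -/
def dG : Form Agt → ℕ
  | .atom _ => 0
  | .neg φ => dG φ
  | .know _ φ => dG φ
  | .coal _ φ => dG φ
  | .and φ ψ => max (dG φ) (dG ψ)
  | .ann ψ φ => dG ψ + dG φ
  | .group _ χ φ => dG χ + dG φ + 1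

/-- The [⟨⟩]-depth. -/
def dC : Form Agt → ℕ
  | .atom _ => 0
  | .neg φ => dC φ
  | .know _ φ => dC φ
  | .and φ ψ => max (dC φ) (dC ψ)
  | .ann ψ φ => dC ψ + dC φ
  | .group _ χ φ => dC χ + dC φ
  | .coal _ φ => dC φ + 1

/-- The well-founded order <^{Size}_{[,],[⟨⟩]}. -/
def measLt (φ ψ : Form Agt) : Prop :=
  dC φ < dC ψ ∨ (dC φ = dC ψ ∧ (dG φ < dG ψ ∨ (dG φ = dG ψ ∧ fsize φ < fsize ψ)))

end CoRGAL

open CoRGAL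

/-- The three agents a, b, c. -/
inductive Ag : Type
  | a | b | c
deriving DecidableEq

instance instFintypeAg : Fintype Ag :=
  ⟨{Ag.a, Ag.b, Ag.c}, fun x => by cases x <;> simp⟩

/-- The four states pqr, pq¬r, ¬pqr, p¬qr. -/
inductive St : Type
  | pqr | pqnr | npqr | pnqr
deriving DecidableEq

/-- Equivalence classes of the indistinguishability relations: a cannot distinguish
pqr from ¬pqr, b cannot distinguish pqr from p¬qr, c cannot distinguish pqr, pq¬r,
¬pqr from each other. -/
def cls : Ag → St → ℕ
  | .a, .pqr => 0
  | .a, .npqr => 0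
  | .a, .pqnr => 1
  | .a, .pnqr => 2
  | .b, .pqr => 0
  | .b, .pnqr => 0
  | .b, .pqnr => 1
  | .b, .npqr => 2
  | .c, .pqr => 0
  | .c, .pqnr => 0
  | .c, .npqr => 0
  | .c, .pnqr => 1

/-- Valuation: p (atom 0), q (atom 1), r (atom 2) are true exactly at the states whose
name contains them unnegated. -/
def cval : ℕ → St → Prop
  | 0, .pqr => True
  | 0, .pqnr => True
  | 0, .pnqr => True
  | 1, .pqr => True
  | 1, .pqnr => True
  | 1, .npqr => True
  | 2, .pqr => True
  | 2, .npqr => True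
  | 2, .pnqr => True
  | _, _ => False

/-- The counterexample model. -/
def cmod : Model Ag where
  W := St
  rel i u v := cls i u = cls i v
  rel_equiv _ := ⟨fun _ => rfl, Eq.symm, Eq.trans⟩
  val := cval

/-- p ∧ q ∧ r. -/
def pqrF : Form Ag := (Form.atom 0).and ((Form.atom 1).and (Form.atom 2))

/-- φ := K_b(p∧q∧r) ∧ ¬K_a(p∧q∧r) ∧ ¬K_c(p∧q∧r). -/
def phiC : Form Ag :=
  (Form.know Ag.b pqrF).and
    ((Form.neg (Form.know Ag.a pqrF)).and (Form.neg (Form.know Ag.c pqrF)))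

open CoRGAL

/-- A true epistemic formula. -/
def etop : EForm Ag := .neg (.and (.atom 0) (.neg (.atom 0)))

lemma esat_etop (M : Model Ag) (w : M.W) : esat M w etop := by
  simp [etop, esat]

lemma gsat_etop (M : Model Ag) (w : M.W) (G : Finset Ag) :
    gsat M w G (fun _ => etop) := fun _ _ v _ => esat_etop M v

/-- In `cmod`, c-related states to class-0 states. -/
lemma relc_pqr (v : St) : cmod.rel Ag.c St.npqr v ↔ cmod.rel Ag.c St.pqr v := by
  cases v <;> simp [cmod, cls]

/-- the schema [⟨A∖(G∪H)⟩]φ → ⟨[G]⟩⟨[H]⟩φ is not valid: in the model above,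
(M,pqr) ⊨ [⟨{c}⟩]φ but (M,pqr) ⊭ ⟨[{a}]⟩⟨[{b}]⟩φ. -/
theorem statement10 :
    sat cmod St.pqr (Form.coal {Ag.c} phiC) ∧
    ¬ sat cmod St.pqr (coalDia {Ag.a} (coalDia {Ag.b} phiC)) := by
  constructor
  · -- Part 1
    simp only [sat]
    intro f
    refine ⟨fun i => match i with | .a => .atom 1 | _ => etop, ?_⟩
    intro hf
    have hga : ∀ w : St, (w = St.pqr ∨ w = St.npqr) →
        gsat cmod w ({Ag.c} : Finset Ag)ᶜ
          (fun i => match i with | .a => EForm.atom 1 | _ => etop) := by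
      rintro w hw i hi v hv
      cases i with
      | a =>
        rcases hw with h | h <;> subst h <;>
          · cases v <;> simp_all [cmod, cls, esat, cval]
      | b => exact esat_etop _ _
      | c => exact absurd hi (by decide)
    have hfn : gsat cmod St.npqr {Ag.c} f := by
      intro i hi v hv
      have : i = Ag.c := by simpa using hi
      subst this
      exact hf Ag.c (by simp) v ((relc_pqr v).mp hv)
    refine ⟨⟨hf, hga St.pqr (Or.inl rfl)⟩, ?_⟩
    have hnp : (fun v => gsat cmod v {Ag.c} f ∧ gsat cmod v ({Ag.c} : Finset Ag)ᶜ
        (fun i => match i with | .a => EForm.atom 1 | _ => etop)) St.npqr :=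
      ⟨hfn, hga St.npqr (Or.inr rfl)⟩
    refine ⟨?_, ?_, ?_⟩
    · rintro ⟨v, hv⟩ hrel
      cases v with
      | pqr => simp [Model.restrict, cmod, cval, pqrF, sat]
      | pnqr =>
        exfalso
        have := hv.2 Ag.a (by decide) St.pnqr (by simp [cmod, cls])
        simp [esat, cmod, cval] at this
      | pqnr => simp [Model.restrict, cmod, cls] at hrel
      | npqr => simp [Model.restrict, cmod, cls] at hrel
    · intro h
      have := h ⟨St.npqr, hnp⟩ (by simp [Model.restrict, cmod, cls])
      simp [Model.restrict, cmod, cval, pqrF, sat] at this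
    · intro h
      have := h ⟨St.npqr, hnp⟩ (by simp [Model.restrict, cmod, cls])
      simp [Model.restrict, cmod, cval, pqrF, sat] at this
  · -- Part 2
    simp only [coalDia, sat, not_not]
    intro f
    by_cases hp : esat cmod St.pnqr (f Ag.a)
    · -- pnqr survives a's announcement: respond trivially
      refine ⟨fun _ => etop, ?_⟩
      intro hf
      refine ⟨⟨hf, gsat_etop _ _ _⟩, ?_⟩
      have hpn1 : gsat cmod St.pnqr {Ag.a} f ∧
          gsat cmod St.pnqr ({Ag.a} : Finset Ag)ᶜ (fun _ => etop) := by
        constructor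
        · intro i hi v hv
          have : i = Ag.a := by simpa using hi
          subst this
          cases v <;> simp_all [cmod, cls]
        · exact gsat_etop _ _ _
      intro f'
      refine ⟨fun _ => etop, ?_⟩
      intro hf'
      refine ⟨⟨hf', gsat_etop _ _ _⟩, ?_⟩
      set M1 := cmod.restrict (fun v => gsat cmod v {Ag.a} f ∧
          gsat cmod v ({Ag.a} : Finset Ag)ᶜ (fun _ => etop)) with hM1
      have hpn2 : gsat M1 ⟨St.pnqr, hpn1⟩ {Ag.b} f' ∧
          gsat M1 ⟨St.pnqr, hpn1⟩ ({Ag.b} : Finset Ag)ᶜ (fun _ => etop) := by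
        constructor
        · intro i hi v hv
          have : i = Ag.b := by simpa using hi
          subst this
          obtain ⟨u, hu⟩ := v
          have hv' : cls Ag.b St.pnqr = cls Ag.b u := hv
          refine hf' Ag.b (by simp) ⟨u, hu⟩ ?_
          show cls Ag.b St.pqr = cls Ag.b u
          revert hv'
          cases u <;> decide
        · exact gsat_etop _ _ _
      rintro ⟨hKb, -, -⟩
      have := hKb ⟨⟨St.pnqr, hpn1⟩, hpn2⟩ (by simp [hM1, Model.restrict, cmod, cls])
      simp [Model.restrict, hM1, cmod, cval, pqrF, sat] at this
    · -- pnqr does not survive: exclude npqr via K_b p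
      refine ⟨fun i => match i with | .b => .atom 0 | _ => etop, ?_⟩
      intro hf
      have hgb : gsat cmod St.pqr ({Ag.a} : Finset Ag)ᶜ
          (fun i => match i with | .b => EForm.atom 0 | _ => etop) := by
        intro i hi v hv
        cases i with
        | a => exact absurd hi (by decide)
        | b => cases v <;> simp_all [cmod, cls, esat, cval]
        | c => exact esat_etop _ _
      refine ⟨⟨hf, hgb⟩, ?_⟩
      -- npqr and pnqr are not in M1
      have hnonpqr : ¬ (gsat cmod St.npqr {Ag.a} f ∧ gsat cmod St.npqr ({Ag.a} : Finset Ag)ᶜ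
          (fun i => match i with | .b => EForm.atom 0 | _ => etop)) := by
        rintro ⟨-, h2⟩
        have := h2 Ag.b (by decide) St.npqr (by simp [cmod, cls])
        simp [esat, cmod, cval] at this
      have hnopnqr : ¬ (gsat cmod St.pnqr {Ag.a} f ∧ gsat cmod St.pnqr ({Ag.a} : Finset Ag)ᶜ
          (fun i => match i with | .b => EForm.atom 0 | _ => etop)) := by
        rintro ⟨h1, -⟩
        exact hp (h1 Ag.a (by simp) St.pnqr (by simp [cmod, cls]))
      intro f'
      refine ⟨fun _ => etop, ?_⟩
      intro hf'
      refine ⟨⟨hf', gsat_etop _ _ _⟩, ?_⟩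
      rintro ⟨-, hKa, -⟩
      apply hKa
      rintro ⟨⟨v, hv⟩, hv2⟩ hrel
      cases v with
      | pqr => simp [Model.restrict, cmod, cval, pqrF, sat]
      | npqr => exact absurd hv hnonpqr
      | pqnr => simp [Model.restrict, cmod, cls] at hrel
      | pnqr => exact absurd hv hnopnqr
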